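/- arXiv:2605.01565 — 3 statements merged into one kernel-verified Lean document; each statement's English description precedes it below -/
import Mathlib

section
/- If x is a vertex of G₂ with Z(x) = S, then the open neighborhood of x in G₂ is the disjoint union of the classes X_T over all nonempty subsets T of the complement S^c = {1,…,m} ∖ S; in particular, the neighborhood of x depends only on S. -/
open Finset

abbrev NN (m : ℕ) (p : Fin m → ℕ) : ℕ := ∏ i, p i

abbrev Vtx (m : ℕ) (p : Fin m → ℕ) : Type :=
  {x : ZMod (NN m p) // x ≠ 0 ∧ ¬ IsUnit x}

/-- The induced subgraph `G₂` of the comaximal graph of `ℤ/nℤ` on nonzero nonunits. -/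
def G2 (m : ℕ) (p : Fin m → ℕ) : SimpleGraph (Vtx m p) where
  Adj x y := x ≠ y ∧ Ideal.span ({x.1, y.1} : Set (ZMod (NN m p))) = ⊤
  symm := by
    constructor
    rintro x y ⟨hxy, h⟩
    exact ⟨hxy.symm, by rwa [Set.pair_comm]⟩
  loopless := by constructor; rintro x ⟨h, -⟩; exact h rfl

/-- The zero-set of `x`: indices `i` where the image of `x` in `ℤ/p_iℤ` is zero. -/
def Z (m : ℕ) (p : Fin m → ℕ) (x : ZMod (NN m p)) : Finset (Fin m) :=
  Finset.univ.filter fun i =>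
    (ZMod.castHom (Finset.dvd_prod_of_mem p (Finset.mem_univ i)) (ZMod (p i))) x = 0

/-- The class `X_S` of vertices of `G₂` with zero-set `S`. -/
def XS (m : ℕ) (p : Fin m → ℕ) (S : Finset (Fin m)) : Set (Vtx m p) :=
  {x | Z m p x.1 = S}

section Aux

variable {m : ℕ} {p : Fin m → ℕ}

noncomputable def crt (hp : ∀ i, (p i).Prime) (hmono : StrictMono p) :
    ZMod (NN m p) ≃+* Π i, ZMod (p i) :=
  ZMod.prodEquivPi p (fun i j hij =>
    (Nat.coprime_primes (hp i) (hp j)).mpr fun h => hij (hmono.injective h))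

lemma crt_apply (hp : ∀ i, (p i).Prime) (hmono : StrictMono p) (x : ZMod (NN m p))
    (i : Fin m) :
    crt hp hmono x i =
      (ZMod.castHom (Finset.dvd_prod_of_mem p (Finset.mem_univ i)) (ZMod (p i))) x := by
  have : (Pi.evalRingHom (fun i => ZMod (p i)) i).comp
      ((crt hp hmono : ZMod (NN m p) ≃+* Π i, ZMod (p i)) : ZMod (NN m p) →+* Π i, ZMod (p i)) =
      ZMod.castHom (Finset.dvd_prod_of_mem p (Finset.mem_univ i)) (ZMod (p i)) :=
    RingHom.ext_zmod _ _
  exact congrArg (fun f => f x) this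

lemma mem_Z_iff (hp : ∀ i, (p i).Prime) (hmono : StrictMono p) (x : ZMod (NN m p))
    (i : Fin m) : i ∈ Z m p x ↔ crt hp hmono x i = 0 := by
  rw [Z, Finset.mem_filter, crt_apply hp hmono]
  simp

lemma Z_nonempty (hp : ∀ i, (p i).Prime) (hmono : StrictMono p) (x : ZMod (NN m p))
    (hx : ¬ IsUnit x) : (Z m p x).Nonempty := by
  by_contra h
  apply hx
  rw [Finset.not_nonempty_iff_eq_empty] at h
  have hne : ∀ i, crt hp hmono x i ≠ 0 := by
    intro i hi
    have : i ∈ Z m p x := (mem_Z_iff hp hmono x i).mpr hi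
    simp [h] at this
  have : IsUnit (crt hp hmono x) := by
    refine IsUnit.of_mul_eq_one (a := crt hp hmono x) (fun i => (crt hp hmono x i)⁻¹) ?_
    funext i
    have : Fact (p i).Prime := ⟨hp i⟩
    exact mul_inv_cancel₀ (hne i)
  have := this.map (crt hp hmono).symm.toRingHom
  simpa using this

end Aux

theorem stmt4 (m : ℕ) (hm : 2 ≤ m) (p : Fin m → ℕ) (hp : ∀ i, (p i).Prime)
    (hmono : StrictMono p) (x : Vtx m p) (S : Finset (Fin m)) (hx : Z m p x.1 = S) :
    (G2 m p).neighborSet x =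
      ⋃ T ∈ {T : Finset (Fin m) | T.Nonempty ∧ T ⊆ Sᶜ}, XS m p T := by
  set e := crt hp hmono with he
  ext y
  simp only [SimpleGraph.mem_neighborSet, Set.mem_iUnion, Set.mem_setOf_eq, XS]
  constructor
  · rintro ⟨hxy, hspan⟩
    refine ⟨Z m p y.1, ⟨Z_nonempty hp hmono y.1 y.2.2, ?_⟩, rfl⟩
    intro i hi
    rw [Finset.mem_compl]
    intro hiS
    rw [← hx, mem_Z_iff hp hmono] at hiS
    rw [mem_Z_iff hp hmono] at hi
    rw [Ideal.eq_top_iff_one, Ideal.mem_span_pair] at hspan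
    obtain ⟨a, b, hab⟩ := hspan
    have := congrArg (fun z => e z i) hab
    simp only [map_add, map_mul, map_one, Pi.add_apply, Pi.mul_apply, Pi.one_apply] at this
    rw [hiS, hi, mul_zero, mul_zero, add_zero] at this
    have hfact : Fact (p i).Prime := ⟨hp i⟩
    exact zero_ne_one this
  · rintro ⟨T, ⟨hTne, hTsub⟩, hyT⟩
    have hdisj : ∀ i, e x.1 i ≠ 0 ∨ e y.1 i ≠ 0 := by
      intro i
      by_contra h
      push_neg at h
      have hiS : i ∈ S := by
        rw [← hx, mem_Z_iff hp hmono]; exact h.1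
      have hiT : i ∈ T := by
        rw [← hyT, mem_Z_iff hp hmono]; exact h.2
      exact (Finset.mem_compl.mp (hTsub hiT)) hiS
    have hSne : S.Nonempty := hx ▸ Z_nonempty hp hmono x.1 x.2.2
    have hxy : x ≠ y := by
      rintro rfl
      obtain ⟨i, hi⟩ := hSne
      exact (Finset.mem_compl.mp (hTsub (hyT ▸ hx ▸ hi))) hi
    refine ⟨hxy, ?_⟩
    rw [Ideal.eq_top_iff_one, Ideal.mem_span_pair]
    classical
    set u : Π i, ZMod (p i) := fun i => if e x.1 i ≠ 0 then (e x.1 i)⁻¹ else 0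
    set v : Π i, ZMod (p i) := fun i => if e x.1 i ≠ 0 then 0 else (e y.1 i)⁻¹
    refine ⟨e.symm u, e.symm v, ?_⟩
    apply e.injective
    simp only [map_add, map_mul, e.apply_symm_apply, map_one]
    funext i
    have : Fact (p i).Prime := ⟨hp i⟩
    simp only [Pi.add_apply, Pi.mul_apply, Pi.one_apply, u, v]
    by_cases h : e x.1 i ≠ 0
    · rw [if_pos h, if_pos h, inv_mul_cancel₀ h, zero_mul, add_zero]
    · push_neg at h
      have hy : e y.1 i ≠ 0 := (hdisj i).resolve_left (by simpa using h)
      rw [if_neg (by simpa using h), if_neg (by simpa using h), zero_mul, zero_add,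
        inv_mul_cancel₀ hy]
end

section
/- The minimum degree of G₂ is δ(G₂) = ∏_{i=1}^{m−1} (p_i − 1), and this minimum is attained exactly by the vertices x with Z(x) = {1,…,m−1} (i.e., the class X_{{1,…,m}∖{m}}). -/
open Finset

/-- Minimum degree of a graph. -/
noncomputable def minDeg {V : Type*} (G : SimpleGraph V) : ℕ :=
  sInf {d | ∃ x, (G.neighborSet x).ncard = d}

section Aux
variable {m : ℕ} {p : Fin m → ℕ}

lemma hcop (hp : ∀ i, (p i).Prime) (hmono : StrictMono p) : Pairwise (Function.onFun Nat.Coprime p) :=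
  fun i j hij => (Nat.coprime_primes (hp i) (hp j)).mpr fun h => hij (hmono.injective h)

noncomputable def CRT (hp : ∀ i, (p i).Prime) (hmono : StrictMono p) :
    ZMod (NN m p) ≃+* Π i, ZMod (p i) :=
  ZMod.prodEquivPi p (hcop hp hmono)

variable (hp : ∀ i, (p i).Prime) (hmono : StrictMono p)

lemma zeq (x : ZMod (NN m p)) (i : Fin m) :
    (ZMod.castHom (Finset.dvd_prod_of_mem p (Finset.mem_univ i)) (ZMod (p i))) x
      = CRT hp hmono x i := by
  have : (ZMod.castHom (Finset.dvd_prod_of_mem p (Finset.mem_univ i)) (ZMod (p i)))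
      = (Pi.evalRingHom (fun j => ZMod (p j)) i).comp (CRT hp hmono).toRingHom :=
    RingHom.ext_zmod _ _
  rw [this]; rfl

lemma Zmem (x : ZMod (NN m p)) (i : Fin m) :
    i ∈ Z m p x ↔ CRT hp hmono x i = 0 := by
  rw [Z, Finset.mem_filter, zeq hp hmono]
  simp

lemma zero_iff (x : ZMod (NN m p)) : x = 0 ↔ ∀ i, CRT hp hmono x i = 0 := by
  constructor
  · rintro rfl i; simp
  · intro h
    apply (CRT hp hmono).injective
    rw [map_zero]
    funext i
    exact h i

lemma unit_iff (x : ZMod (NN m p)) : IsUnit x ↔ ∀ i, CRT hp hmono x i ≠ 0 := by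
  haveI : ∀ i, Fact (p i).Prime := fun i => ⟨hp i⟩
  constructor
  · intro hx i h
    have : IsUnit (CRT hp hmono x i) :=
      (hx.map (CRT hp hmono).toRingHom).map (Pi.evalRingHom (fun j => ZMod (p j)) i)
    rw [h] at this; exact this.ne_zero rfl
  · intro h
    refine IsUnit.of_mul_eq_one (a := x) ((CRT hp hmono).symm fun i => (CRT hp hmono x i)⁻¹) ?_
    apply (CRT hp hmono).injective
    rw [map_mul, map_one]
    funext i
    simp only [RingEquiv.apply_symm_apply, Pi.mul_apply, Pi.one_apply]
    exact mul_inv_cancel₀ (h i)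

lemma span_iff (x y : ZMod (NN m p)) :
    Ideal.span ({x, y} : Set (ZMod (NN m p))) = ⊤ ↔
      ∀ i, CRT hp hmono x i ≠ 0 ∨ CRT hp hmono y i ≠ 0 := by
  haveI : ∀ i, Fact (p i).Prime := fun i => ⟨hp i⟩
  rw [Ideal.eq_top_iff_one, Ideal.mem_span_pair]
  constructor
  · rintro ⟨a, b, hab⟩ i
    by_contra hc
    push_neg at hc
    have := congrFun (congrArg (CRT hp hmono) hab) i
    simp only [map_add, map_mul, map_one, Pi.add_apply, Pi.mul_apply, Pi.one_apply,
      hc.1, hc.2, mul_zero, add_zero] at this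
    exact zero_ne_one this
  · intro h
    refine ⟨(CRT hp hmono).symm fun i => if CRT hp hmono x i ≠ 0 then (CRT hp hmono x i)⁻¹ else 0,
      (CRT hp hmono).symm fun i => if CRT hp hmono x i ≠ 0 then 0 else (CRT hp hmono y i)⁻¹, ?_⟩
    apply (CRT hp hmono).injective
    rw [map_add, map_mul, map_mul, map_one]
    funext i
    simp only [RingEquiv.apply_symm_apply, Pi.add_apply, Pi.mul_apply, Pi.one_apply]
    by_cases hx : CRT hp hmono x i ≠ 0
    · simp [hx, inv_mul_cancel₀ hx]
    · have hy : CRT hp hmono y i ≠ 0 := (h i).resolve_left hx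
      push_neg at hx
      simp [hx, hy, inv_mul_cancel₀ hy]

lemma keyeq (L : Fin m) :
    ∏ i, (if i ∈ univ.erase L then p i - 1 else p i)
      = p L * ∏ i ∈ univ.erase L, (p i - 1) := by
  rw [← Finset.mul_prod_erase univ _ (mem_univ L)]
  congr 1
  · simp
  · exact Finset.prod_congr rfl fun i hi => by simp [hi]

lemma keylt (hp : ∀ i, (p i).Prime) (hmono : StrictMono p) {L : Fin m} (hL : (L : ℕ) = m - 1) (S : Finset (Fin m)) (hS : S ≠ univ)
    (hne : S ≠ univ.erase L) :
    p L * ∏ i ∈ univ.erase L, (p i - 1) < ∏ i, (if i ∈ S then p i - 1 else p i) := by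
  have hp2 : ∀ i, 2 ≤ p i := fun i => (hp i).two_le
  have hF1 : ∀ i, 1 ≤ (if i ∈ S then p i - 1 else p i) := by
    intro i; have := hp2 i; split <;> omega
  have hFge : ∀ i, p i - 1 ≤ (if i ∈ S then p i - 1 else p i) := by
    intro i; have := hp2 i; split <;> omega
  by_cases hLS : L ∈ S
  · obtain ⟨j, hj⟩ : ∃ j, j ∉ S := by
      by_contra hc; push_neg at hc; exact hS (Finset.eq_univ_of_forall hc)
    have hjL : j ≠ L := fun h => hj (h ▸ hLS)
    have hjmem : j ∈ univ.erase L := Finset.mem_erase.mpr ⟨hjL, mem_univ j⟩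
    have hpj : p j < p L := by
      apply hmono
      have h1 := j.isLt
      have h2 : (j : ℕ) ≠ (L : ℕ) := Fin.val_ne_of_ne hjL
      exact Fin.lt_def.mpr (by omega)
    rw [← Finset.mul_prod_erase univ (fun i => if i ∈ S then p i - 1 else p i) (mem_univ L),
      ← Finset.mul_prod_erase (univ.erase L) (fun i => if i ∈ S then p i - 1 else p i) hjmem,
      ← Finset.mul_prod_erase (univ.erase L) (fun i => p i - 1) hjmem]
    simp only [if_pos hLS, if_neg hj]
    have hA : ∏ i ∈ (univ.erase L).erase j, (p i - 1)
        ≤ ∏ i ∈ (univ.erase L).erase j, (if i ∈ S then p i - 1 else p i) :=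
      Finset.prod_le_prod (fun i _ => Nat.zero_le _) (fun i _ => hFge i)
    have hApos : 0 < ∏ i ∈ (univ.erase L).erase j, (p i - 1) :=
      Finset.prod_pos fun i _ => by have := hp2 i; omega
    have hkey : p L * ((p j - 1) * ∏ i ∈ (univ.erase L).erase j, (p i - 1))
        < (p L - 1) * (p j * ∏ i ∈ (univ.erase L).erase j, (p i - 1)) := by
      rw [← mul_assoc, ← mul_assoc]
      apply Nat.mul_lt_mul_of_lt_of_le _ le_rfl hApos
      have h2L := hp2 L
      have h2j := hp2 j
      rw [Nat.sub_mul, one_mul, Nat.mul_sub, mul_one]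
      exact Nat.sub_lt_sub_left
        (lt_of_lt_of_le (by omega : p j < 2 * p j) (Nat.mul_le_mul_right _ h2L)) hpj
    calc p L * ((p j - 1) * ∏ i ∈ (univ.erase L).erase j, (p i - 1))
        < (p L - 1) * (p j * ∏ i ∈ (univ.erase L).erase j, (p i - 1)) := hkey
      _ ≤ (p L - 1) * (p j * ∏ i ∈ (univ.erase L).erase j, (if i ∈ S then p i - 1 else p i)) := by
          apply Nat.mul_le_mul_left
          exact Nat.mul_le_mul_left _ hA
  · have hsub : S ⊆ univ.erase L := fun i hi =>
      Finset.mem_erase.mpr ⟨fun h => hLS (h ▸ hi), mem_univ i⟩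
    obtain ⟨j, hjmem, hj⟩ : ∃ j ∈ univ.erase L, j ∉ S :=
      Finset.exists_of_ssubset (lt_of_le_of_ne hsub hne)
    have hjL : j ≠ L := (Finset.mem_erase.mp hjmem).1
    rw [← Finset.mul_prod_erase univ (fun i => if i ∈ S then p i - 1 else p i) (mem_univ L),
      ← Finset.mul_prod_erase (univ.erase L) (fun i => if i ∈ S then p i - 1 else p i) hjmem,
      ← Finset.mul_prod_erase (univ.erase L) (fun i => p i - 1) hjmem]
    simp only [if_neg hLS, if_neg hj]
    have hA : ∏ i ∈ (univ.erase L).erase j, (p i - 1)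
        ≤ ∏ i ∈ (univ.erase L).erase j, (if i ∈ S then p i - 1 else p i) :=
      Finset.prod_le_prod (fun i _ => Nat.zero_le _) (fun i _ => hFge i)
    have hApos : 0 < ∏ i ∈ (univ.erase L).erase j, (p i - 1) :=
      Finset.prod_pos fun i _ => by have := hp2 i; omega
    apply Nat.mul_lt_mul_of_le_of_lt le_rfl _ (by have := hp2 L; omega)
    calc (p j - 1) * ∏ i ∈ (univ.erase L).erase j, (p i - 1)
        < p j * ∏ i ∈ (univ.erase L).erase j, (p i - 1) := by
          apply Nat.mul_lt_mul_of_lt_of_le _ le_rfl hApos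
          have := hp2 j; omega
      _ ≤ p j * ∏ i ∈ (univ.erase L).erase j, (if i ∈ S then p i - 1 else p i) :=
          Nat.mul_le_mul_left _ hA

lemma deg_eq (hp : ∀ i, (p i).Prime) (hmono : StrictMono p) (x : Vtx m p) :
    ((G2 m p).neighborSet x).ncard
      = ∏ i, (if i ∈ Z m p x.1 then p i - 1 else p i) - ∏ i, (p i - 1) := by
  classical
  haveI : NeZero (NN m p) := ⟨(Finset.prod_pos fun i _ => (hp i).pos).ne'⟩
  haveI : ∀ i, NeZero (p i) := fun i => ⟨(hp i).pos.ne'⟩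
  set e := CRT hp hmono with he
  obtain ⟨i0, hi0⟩ : ∃ i, e x.1 i = 0 := by
    by_contra hc; push_neg at hc
    exact x.2.2 ((unit_iff hp hmono x.1).mpr hc)
  set T : Set (Π i, ZMod (p i)) :=
    {f | (∀ i, e x.1 i = 0 → f i ≠ 0) ∧ ∃ j, f j = 0} with hT
  have hcard : Nat.card ((G2 m p).neighborSet x) = Nat.card T := by
    apply Nat.card_congr
    refine Equiv.ofBijective (fun y => ⟨e y.1.1, ?_, ?_⟩) ⟨?_, ?_⟩
    · intro i hxi
      have hspan := y.2.2
      have := (span_iff hp hmono x.1 y.1.1).mp hspan i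
      exact this.resolve_left (fun h => h (by rw [← he]; exact hxi))
    · by_contra hc; push_neg at hc
      exact y.1.2.2 ((unit_iff hp hmono y.1.1).mpr hc)
    · intro a b hab
      have : e a.1.1 = e b.1.1 := congrArg Subtype.val hab
      exact Subtype.ext (Subtype.ext (e.injective this))
    · rintro ⟨f, hf1, j, hfj⟩
      have hef : e (e.symm f) = f := e.apply_symm_apply f
      have hne0 : e.symm f ≠ 0 := by
        intro h
        have : f i0 = 0 := by rw [← hef, h, map_zero]; rfl
        exact hf1 i0 hi0 this
      have hnu : ¬ IsUnit (e.symm f) := by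
        intro h
        have := (unit_iff hp hmono _).mp h j
        rw [hef] at this
        exact this hfj
      have hspan : Ideal.span ({x.1, e.symm f} : Set (ZMod (NN m p))) = ⊤ := by
        rw [span_iff hp hmono]
        intro i
        by_cases hxi : e x.1 i = 0
        · right; rw [hef]; exact hf1 i hxi
        · left; exact hxi
      have hxne : x ≠ ⟨e.symm f, hne0, hnu⟩ := by
        intro h
        have : e x.1 = f := by rw [h]; exact hef
        exact hf1 i0 hi0 (by rw [← this]; exact hi0)
      exact ⟨⟨⟨e.symm f, hne0, hnu⟩, hxne, hspan⟩, Subtype.ext hef⟩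
  rw [← Nat.card_coe_set_eq, hcard, Nat.card_coe_set_eq]
  have hTA : T = ↑((Fintype.piFinset fun i =>
        if e x.1 i = 0 then (univ.erase (0 : ZMod (p i))) else univ) \
      (Fintype.piFinset fun i => (univ.erase (0 : ZMod (p i))))) := by
    ext f
    simp only [hT, Set.mem_setOf_eq, Finset.coe_sdiff, Set.mem_diff, Finset.mem_coe,
      Fintype.mem_piFinset]
    constructor
    · rintro ⟨h1, j, hj⟩
      refine ⟨fun i => ?_, fun hc => ?_⟩
      · by_cases hxi : e x.1 i = 0
        · rw [if_pos hxi]; exact Finset.mem_erase.mpr ⟨h1 i hxi, mem_univ _⟩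
        · rw [if_neg hxi]; exact mem_univ _
      · exact (Finset.mem_erase.mp (hc j)).1 hj
    · rintro ⟨h1, h2⟩
      refine ⟨fun i hxi => ?_, ?_⟩
      · have := h1 i; rw [if_pos hxi] at this; exact (Finset.mem_erase.mp this).1
      · by_contra hc; push_neg at hc
        exact h2 fun i => Finset.mem_erase.mpr ⟨hc i, mem_univ _⟩
  rw [hTA, Set.ncard_coe_finset]
  rw [Finset.card_sdiff_of_subset]
  · congr 1
    · rw [Fintype.card_piFinset]
      refine Finset.prod_congr rfl fun i _ => ?_
      by_cases hxi : e x.1 i = 0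
      · rw [if_pos hxi, if_pos ((Zmem hp hmono x.1 i).mpr hxi),
          Finset.card_erase_of_mem (mem_univ _), Finset.card_univ, ZMod.card]
      · rw [if_neg hxi, if_neg (fun h => hxi ((Zmem hp hmono x.1 i).mp h)),
          Finset.card_univ, ZMod.card]
    · rw [Fintype.card_piFinset]
      refine Finset.prod_congr rfl fun i _ => ?_
      rw [Finset.card_erase_of_mem (mem_univ _), Finset.card_univ, ZMod.card]
  · intro f hf
    rw [Fintype.mem_piFinset] at hf ⊢
    intro i
    split
    · exact hf i
    · exact mem_univ _

end Aux

theorem stmt7 (m : ℕ) (hm : 2 ≤ m) (p : Fin m → ℕ) (hp : ∀ i, (p i).Prime)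
    (hmono : StrictMono p) :
    minDeg (G2 m p) = ∏ i ∈ Finset.univ.erase (⟨m - 1, by omega⟩ : Fin m), (p i - 1) ∧
    ∀ x : Vtx m p,
      (((G2 m p).neighborSet x).ncard = ∏ i ∈ Finset.univ.erase (⟨m - 1, by omega⟩ : Fin m), (p i - 1) ↔
        Z m p x.1 = Finset.univ.erase (⟨m - 1, by omega⟩ : Fin m)) := by
  haveI : NeZero (NN m p) := ⟨(Finset.prod_pos fun i _ => (hp i).pos).ne'⟩
  haveI : ∀ i, Fact (p i).Prime := fun i => ⟨hp i⟩
  set L : Fin m := ⟨m - 1, by omega⟩ with hLdef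
  have hL : (L : ℕ) = m - 1 := rfl
  set D : ℕ := ∏ i ∈ Finset.univ.erase L, (p i - 1) with hD
  set Q : ℕ := ∏ i, (p i - 1) with hQ
  have hQD : Q = (p L - 1) * D :=
    (Finset.mul_prod_erase univ (fun i => p i - 1) (mem_univ L)).symm
  have hDpos : 0 < D := Finset.prod_pos fun i _ => by have := (hp i).two_le; omega
  have hpLD : p L * D = Q + D := by
    have h2 := (hp L).two_le
    calc p L * D = (p L - 1 + 1) * D := by rw [Nat.sub_add_cancel (by omega)]
      _ = (p L - 1) * D + D := by ring
      _ = Q + D := by rw [hQD]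
  have hSuniv : ∀ x : Vtx m p, Z m p x.1 ≠ univ := by
    intro x h
    apply x.2.1
    rw [zero_iff hp hmono]
    intro i
    exact (Zmem hp hmono x.1 i).mp (h ▸ mem_univ i)
  have hQle : ∀ x : Vtx m p,
      Q ≤ ∏ i, (if i ∈ Z m p x.1 then p i - 1 else p i) :=
    fun x => Finset.prod_le_prod (fun i _ => Nat.zero_le _)
      (fun i _ => by have := (hp i).two_le; split <;> omega)
  -- part 2
  have part2 : ∀ x : Vtx m p,
      ((G2 m p).neighborSet x).ncard = D ↔ Z m p x.1 = Finset.univ.erase L := by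
    intro x
    rw [deg_eq hp hmono x, ← hQ]
    constructor
    · intro h
      by_contra hne
      have hlt := keylt hp hmono hL (Z m p x.1) (hSuniv x) hne
      rw [← hD] at hlt
      have hQlex := hQle x
      omega
    · intro h
      rw [h, keyeq, ← hD, hpLD]
      omega
  refine ⟨?_, part2⟩
  -- construct the extremal vertex
  set f : Π i, ZMod (p i) := fun i => if i = L then 1 else 0 with hf
  set v : ZMod (NN m p) := (CRT hp hmono).symm f with hv
  have hef : CRT hp hmono v = f := (CRT hp hmono).apply_symm_apply f
  have hne0 : v ≠ 0 := by
    intro h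
    have := (zero_iff hp hmono v).mp h L
    rw [hef] at this
    simp [hf] at this
  have hnu : ¬ IsUnit v := by
    intro h
    have h0L : (⟨0, by omega⟩ : Fin m) ≠ L := by
      intro hc
      have := congrArg Fin.val hc
      simp [hL] at this
      omega
    have := (unit_iff hp hmono v).mp h ⟨0, by omega⟩
    rw [hef] at this
    simp [hf, h0L] at this
  set x0 : Vtx m p := ⟨v, hne0, hnu⟩ with hx0
  have hZx0 : Z m p x0.1 = Finset.univ.erase L := by
    ext i
    rw [Zmem hp hmono, hef]
    simp only [hf, Finset.mem_erase, mem_univ, and_true]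
    by_cases hi : i = L
    · simp [hi]
    · simp [hi]
  have hmem : D ∈ {d | ∃ x : Vtx m p, ((G2 m p).neighborSet x).ncard = d} :=
    ⟨x0, (part2 x0).mpr hZx0⟩
  apply le_antisymm
  · exact Nat.sInf_le hmem
  · apply le_csInf ⟨D, hmem⟩
    rintro d ⟨x, rfl⟩
    rw [deg_eq hp hmono x, ← hQ]
    have hQlex := hQle x
    by_cases hne : Z m p x.1 = Finset.univ.erase L
    · rw [hne, keyeq, ← hD, hpLD]; omega
    · have hlt := keylt hp hmono hL (Z m p x.1) (hSuniv x) hne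
      rw [← hD] at hlt
      omega
end

section
/- Assume m ≥ 3. Then every vertex x of G₂ whose zero-set Z(x) is a singleton has eccentricity exactly 2, and every vertex x with |Z(x)| ≥ 2 has eccentricity at least 3; consequently the radius of G₂ is 2 and the center of G₂ is exactly the union of the classes X_{{i}} over i ∈ {1,…,m}. -/
open Finset

/-- Eccentricity of a vertex: the maximum distance from it to any vertex. -/
noncomputable def ecc {V : Type*} (G : SimpleGraph V) (x : V) : ℕ :=
  sSup {d | ∃ y, G.dist x y = d}

/-- Radius: the minimum eccentricity over all vertices. -/
noncomputable def gradius {V : Type*} (G : SimpleGraph V) : ℕ :=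
  sInf {d | ∃ x, ecc G x = d}

section Aux

variable {m : ℕ} {p : Fin m → ℕ}

lemma NN_pos (hp : ∀ i, (p i).Prime) : 0 < NN m p :=
  Finset.prod_pos fun i _ => (hp i).pos

lemma mem_Z (hp : ∀ i, (p i).Prime) (x : ZMod (NN m p)) (i : Fin m) :
    i ∈ Z m p x ↔ p i ∣ x.val := by
  haveI : NeZero (NN m p) := ⟨(NN_pos hp).ne'⟩
  have hx : ((x.val : ℕ) : ZMod (NN m p)) = x := ZMod.natCast_rightInverse x
  simp only [Z, Finset.mem_filter, Finset.mem_univ, true_and]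
  conv_lhs => rw [← hx]
  rw [map_natCast, ZMod.natCast_eq_zero_iff]

lemma Z_eq_empty_iff (hp : ∀ i, (p i).Prime) (x : ZMod (NN m p)) :
    Z m p x = ∅ ↔ IsUnit x := by
  haveI : NeZero (NN m p) := ⟨(NN_pos hp).ne'⟩
  have hx : ((x.val : ℕ) : ZMod (NN m p)) = x := ZMod.natCast_rightInverse x
  rw [← hx, ZMod.isUnit_iff_coprime, Nat.coprime_prod_right_iff]
  rw [Finset.eq_empty_iff_forall_notMem]
  refine ⟨fun h i _ => ?_, fun h i hi => ?_⟩
  · rw [Nat.coprime_comm]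
    exact (Nat.Prime.coprime_iff_not_dvd (hp i)).mpr
      (by simpa [mem_Z hp, hx] using h i)
  · rw [mem_Z hp] at hi
    rw [ZMod.val_natCast_of_lt (ZMod.val_lt x)] at hi
    have := h i (Finset.mem_univ i)
    rw [Nat.coprime_comm, Nat.Prime.coprime_iff_not_dvd (hp i)] at this
    exact this hi

lemma Z_eq_univ_iff (hp : ∀ i, (p i).Prime) (hinj : Function.Injective p)
    (x : ZMod (NN m p)) : Z m p x = Finset.univ ↔ x = 0 := by
  haveI : NeZero (NN m p) := ⟨(NN_pos hp).ne'⟩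
  constructor
  · intro h
    have hall : ∀ i, p i ∣ x.val := fun i => (mem_Z hp x i).mp (h ▸ Finset.mem_univ i)
    have hdvd : NN m p ∣ x.val := by
      have : ∏ q ∈ Finset.univ.image p, q ∣ x.val := by
        refine Finset.prod_primes_dvd _ (fun q hq => ?_) (fun q hq => ?_)
        · obtain ⟨i, _, rfl⟩ := Finset.mem_image.mp hq
          exact (hp i).prime
        · obtain ⟨i, _, rfl⟩ := Finset.mem_image.mp hq
          exact hall i
      rwa [Finset.prod_image (fun i _ j _ h => hinj h)] at this
    have := Nat.eq_zero_of_dvd_of_lt hdvd (ZMod.val_lt x)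
    rwa [ZMod.val_eq_zero] at this
  · rintro rfl
    ext i
    simp [mem_Z hp, ZMod.val_zero]

lemma adj_iff (hp : ∀ i, (p i).Prime) (x y : Vtx m p) :
    (G2 m p).Adj x y ↔ x ≠ y ∧ Z m p x.1 ∩ Z m p y.1 = ∅ := by
  haveI : NeZero (NN m p) := ⟨(NN_pos hp).ne'⟩
  constructor
  · rintro ⟨hne, hspan⟩
    refine ⟨hne, Finset.eq_empty_iff_forall_notMem.mpr fun i hi => ?_⟩
    rw [Finset.mem_inter] at hi
    have h1 : (1 : ZMod (NN m p)) ∈ Ideal.span ({x.1, y.1} : Set (ZMod (NN m p))) := by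
      rw [hspan]; trivial
    obtain ⟨a, b, hab⟩ := Ideal.mem_span_pair.mp h1
    have hx0 : (ZMod.castHom (Finset.dvd_prod_of_mem p (Finset.mem_univ i)) (ZMod (p i))) x.1 = 0 := by
      have := hi.1; simpa only [Z, Finset.mem_filter, Finset.mem_univ, true_and] using this
    have hy0 : (ZMod.castHom (Finset.dvd_prod_of_mem p (Finset.mem_univ i)) (ZMod (p i))) y.1 = 0 := by
      have := hi.2; simpa only [Z, Finset.mem_filter, Finset.mem_univ, true_and] using this
    haveI : Fact (1 < p i) := ⟨(hp i).one_lt⟩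
    have := congrArg (ZMod.castHom (Finset.dvd_prod_of_mem p (Finset.mem_univ i)) (ZMod (p i))) hab
    rw [map_add, map_mul, map_mul, map_one, hx0, hy0, mul_zero, mul_zero, add_zero] at this
    exact zero_ne_one this
  · rintro ⟨hne, hdisj⟩
    refine ⟨hne, ?_⟩
    rw [Ideal.eq_top_iff_one, Ideal.mem_span_pair]
    set a := x.1.val with ha
    set b := y.1.val with hb
    have hg : Nat.gcd (Nat.gcd a b) (NN m p) = 1 := by
      rw [Nat.eq_one_iff_not_exists_prime_dvd]
      intro q hq hqd
      have hqn : q ∣ NN m p := hqd.trans (Nat.gcd_dvd_right _ _)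
      obtain ⟨i, _, hqi⟩ := hq.prime.exists_mem_finset_dvd hqn
      have hqe : q = p i := (Nat.prime_dvd_prime_iff_eq hq (hp i)).mp hqi
      have hgab : q ∣ Nat.gcd a b := hqd.trans (Nat.gcd_dvd_left _ _)
      have h1 : i ∈ Z m p x.1 := (mem_Z hp _ i).mpr (hqe ▸ hgab.trans (Nat.gcd_dvd_left a b))
      have h2 : i ∈ Z m p y.1 := (mem_Z hp _ i).mpr (hqe ▸ hgab.trans (Nat.gcd_dvd_right a b))
      exact Finset.eq_empty_iff_forall_notMem.mp hdisj i (Finset.mem_inter.mpr ⟨h1, h2⟩)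
    -- Bezout over ℤ
    have e1 : ((Nat.gcd a b : ℕ) : ℤ) = a * Nat.gcdA a b + b * Nat.gcdB a b :=
      Nat.gcd_eq_gcd_ab a b
    have e2 : ((Nat.gcd (Nat.gcd a b) (NN m p) : ℕ) : ℤ) =
        (Nat.gcd a b) * Nat.gcdA (Nat.gcd a b) (NN m p)
          + (NN m p) * Nat.gcdB (Nat.gcd a b) (NN m p) :=
      Nat.gcd_eq_gcd_ab _ _
    rw [hg] at e2
    set A := Nat.gcdA (Nat.gcd a b) (NN m p)
    set B := Nat.gcdB (Nat.gcd a b) (NN m p)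
    set A' := Nat.gcdA a b
    set B' := Nat.gcdB a b
    have e3 : (1 : ℤ) = a * (A' * A) + b * (B' * A) + (NN m p) * B := by
      push_cast at e2 ⊢
      rw [e1] at e2
      linarith [e2]
    refine ⟨((A' * A : ℤ) : ZMod (NN m p)), ((B' * A : ℤ) : ZMod (NN m p)), ?_⟩
    have hxa : ((a : ℕ) : ZMod (NN m p)) = x.1 := ZMod.natCast_rightInverse x.1
    have hyb : ((b : ℕ) : ZMod (NN m p)) = y.1 := ZMod.natCast_rightInverse y.1
    have := congrArg (fun z : ℤ => ((z : ZMod (NN m p)))) e3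
    simp only [Int.cast_one, Int.cast_add, Int.cast_mul, Int.cast_natCast,
      ZMod.natCast_self, zero_mul, add_zero] at this
    rw [hxa, hyb] at this
    push_cast
    linear_combination -this

def elt (m : ℕ) (p : Fin m → ℕ) (S : Finset (Fin m)) : ZMod (NN m p) :=
  ((∏ i ∈ S, p i : ℕ) : ZMod (NN m p))

lemma Z_elt (hp : ∀ i, (p i).Prime) (hinj : Function.Injective p) (S : Finset (Fin m)) :
    Z m p (elt m p S) = S := by
  ext i
  simp only [Z, Finset.mem_filter, Finset.mem_univ, true_and, elt, map_natCast]
  rw [ZMod.natCast_eq_zero_iff]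
  constructor
  · intro h
    obtain ⟨j, hj, hij⟩ := (hp i).prime.exists_mem_finset_dvd h
    have hij' := (Nat.prime_dvd_prime_iff_eq (hp i) (hp j)).mp hij
    exact (hinj hij') ▸ hj
  · intro h
    exact Finset.dvd_prod_of_mem p h

lemma exists_vtx (hp : ∀ i, (p i).Prime) (hinj : Function.Injective p)
    (S : Finset (Fin m)) (hS1 : S ≠ ∅) (hS2 : S ≠ Finset.univ) :
    ∃ v : Vtx m p, Z m p v.1 = S := by
  refine ⟨⟨elt m p S, ?_, ?_⟩, Z_elt hp hinj S⟩
  · intro h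
    exact hS2 (by rw [← Z_elt hp hinj S, h, (Z_eq_univ_iff hp hinj 0).mpr rfl])
  · intro h
    exact hS1 (by rw [← Z_elt hp hinj S, (Z_eq_empty_iff hp _).mpr h])

end Aux

section Graph

variable {m : ℕ} {p : Fin m → ℕ}

lemma vtx_Z_ne_empty (hp : ∀ i, (p i).Prime) (v : Vtx m p) : Z m p v.1 ≠ ∅ :=
  fun h => v.2.2 ((Z_eq_empty_iff hp _).mp h)

lemma vtx_Z_ne_univ (hp : ∀ i, (p i).Prime) (hinj : Function.Injective p) (v : Vtx m p) :
    Z m p v.1 ≠ Finset.univ :=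
  fun h => v.2.1 ((Z_eq_univ_iff hp hinj _).mp h)

lemma exists_not_mem_Z (hp : ∀ i, (p i).Prime) (hinj : Function.Injective p) (v : Vtx m p) :
    ∃ b, b ∉ Z m p v.1 := by
  by_contra h
  push_neg at h
  exact vtx_Z_ne_univ hp hinj v (Finset.eq_univ_iff_forall.mpr h)

lemma ne_of_Z_ne {x y : Vtx m p} (h : Z m p x.1 ≠ Z m p y.1) : x ≠ y :=
  fun he => h (by rw [he])

lemma adj_of_Z (hp : ∀ i, (p i).Prime) {x y : Vtx m p} (hne : Z m p x.1 ≠ Z m p y.1)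
    (hd : Z m p x.1 ∩ Z m p y.1 = ∅) : (G2 m p).Adj x y :=
  (adj_iff hp x y).mpr ⟨ne_of_Z_ne hne, hd⟩

lemma singleton_ne_univ (hm : 3 ≤ m) (b : Fin m) : ({b} : Finset (Fin m)) ≠ Finset.univ := by
  intro h
  have h1 : ({b} : Finset (Fin m)).card = 1 := Finset.card_singleton b
  rw [h, Finset.card_univ, Fintype.card_fin] at h1
  omega

lemma walk_two (hm : 3 ≤ m) (hp : ∀ i, (p i).Prime) (hinj : Function.Injective p)
    (w v : Vtx m p) (hw : (Z m p w.1).card = 1) :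
    ∃ q : (G2 m p).Walk w v, q.length ≤ 2 := by
  obtain ⟨a, ha⟩ := Finset.card_eq_one.mp hw
  by_cases hveq : v = w
  · subst hveq; exact ⟨SimpleGraph.Walk.nil, by simp⟩
  by_cases hdisj : Z m p w.1 ∩ Z m p v.1 = ∅
  · exact ⟨SimpleGraph.Walk.cons ((adj_iff hp w v).mpr ⟨fun h => hveq h.symm, hdisj⟩)
      SimpleGraph.Walk.nil, by simp⟩
  · have hav : a ∈ Z m p v.1 := by
      obtain ⟨c, hc⟩ := Finset.nonempty_iff_ne_empty.mpr hdisj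
      rw [Finset.mem_inter, ha, Finset.mem_singleton] at hc
      exact hc.1 ▸ hc.2
    obtain ⟨b, hb⟩ := exists_not_mem_Z hp hinj v
    obtain ⟨z, hz⟩ := exists_vtx hp hinj {b} (Finset.singleton_ne_empty b)
      (singleton_ne_univ hm b)
    have hba : b ≠ a := fun h => hb (h ▸ hav)
    have hadj1 : (G2 m p).Adj w z := by
      refine adj_of_Z hp ?_ ?_
      · rw [ha, hz]
        simp only [ne_eq, Finset.singleton_inj]
        exact fun h => hba h.symm
      · rw [ha, hz]
        exact Finset.singleton_inter_of_notMem
          (Finset.notMem_singleton.mpr fun h => hba h.symm)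
    have hadj2 : (G2 m p).Adj z v := by
      refine adj_of_Z hp ?_ ?_
      · rw [hz]
        intro h
        exact hb (h ▸ Finset.mem_singleton_self b)
      · rw [hz]
        exact Finset.singleton_inter_of_notMem hb
    exact ⟨SimpleGraph.Walk.cons hadj1 (SimpleGraph.Walk.cons hadj2 SimpleGraph.Walk.nil),
      by simp⟩

lemma walk_three (hm : 3 ≤ m) (hp : ∀ i, (p i).Prime) (hinj : Function.Injective p)
    (x y : Vtx m p) : ∃ q : (G2 m p).Walk x y, q.length ≤ 3 := by
  obtain ⟨b, hb⟩ := exists_not_mem_Z hp hinj y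
  obtain ⟨z, hz⟩ := exists_vtx hp hinj {b} (Finset.singleton_ne_empty b) (singleton_ne_univ hm b)
  obtain ⟨q, hq⟩ := walk_two hm hp hinj z x (by rw [hz]; simp)
  have hadj : (G2 m p).Adj z y := by
    refine adj_of_Z hp ?_ ?_
    · rw [hz]; intro h; exact hb (h ▸ Finset.mem_singleton_self b)
    · rw [hz]; exact Finset.singleton_inter_of_notMem hb
  refine ⟨q.reverse.concat hadj, ?_⟩
  rw [SimpleGraph.Walk.length_concat, SimpleGraph.Walk.length_reverse]
  omega

end Graph

theorem stmt18 (m : ℕ) (hm : 3 ≤ m) (p : Fin m → ℕ) (hp : ∀ i, (p i).Prime)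
    (hmono : StrictMono p) :
    (∀ x : Vtx m p, (Z m p x.1).card = 1 → ecc (G2 m p) x = 2) ∧
    (∀ x : Vtx m p, 2 ≤ (Z m p x.1).card → 3 ≤ ecc (G2 m p) x) ∧
    gradius (G2 m p) = 2 ∧
    {x : Vtx m p | ecc (G2 m p) x = gradius (G2 m p)} = ⋃ i : Fin m, XS m p {i} := by
  have hinj : Function.Injective p := hmono.injective
  have hreach : ∀ x y : Vtx m p, (G2 m p).Reachable x y := fun x y =>
    (walk_three hm hp hinj x y).elim fun q _ => ⟨q⟩
  have hdist3 : ∀ x y : Vtx m p, (G2 m p).dist x y ≤ 3 := fun x y => by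
    obtain ⟨q, hq⟩ := walk_three hm hp hinj x y
    exact (SimpleGraph.dist_le q).trans hq
  have hbdd : ∀ x : Vtx m p, BddAbove {d | ∃ y, (G2 m p).dist x y = d} := fun x =>
    ⟨3, by rintro d ⟨y, rfl⟩; exact hdist3 x y⟩
  have hne0 : ∀ x : Vtx m p, {d | ∃ y, (G2 m p).dist x y = d}.Nonempty := fun x =>
    ⟨0, x, SimpleGraph.dist_self⟩
  -- claim 1
  have claim1 : ∀ x : Vtx m p, (Z m p x.1).card = 1 → ecc (G2 m p) x = 2 := by
    intro x hx
    have hub : ∀ y, (G2 m p).dist x y ≤ 2 := fun y => by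
      obtain ⟨q, hq⟩ := walk_two hm hp hinj x y hx
      exact (SimpleGraph.dist_le q).trans hq
    obtain ⟨i, hi⟩ := Finset.card_eq_one.mp hx
    obtain ⟨k, hk⟩ := Fintype.exists_ne_of_one_lt_card (by simp; omega) i
    obtain ⟨y, hy⟩ := exists_vtx hp hinj {i, k} (Finset.insert_ne_empty i {k}) (by
      intro h
      have h1 : ({i, k} : Finset (Fin m)).card ≤ 2 :=
        (Finset.card_insert_le i {k}).trans (by simp)
      rw [h, Finset.card_univ, Fintype.card_fin] at h1
      omega)
    have hxy : (G2 m p).dist x y = 2 := by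
      have hne : x ≠ y := by
        apply ne_of_Z_ne
        rw [hi, hy]
        intro h
        have := congrArg Finset.card h
        rw [Finset.card_singleton, Finset.card_insert_of_notMem
          (Finset.notMem_singleton.mpr fun h' => hk h'.symm), Finset.card_singleton] at this
        omega
      have hnadj : ¬ (G2 m p).Adj x y := by
        rw [adj_iff hp]
        rintro ⟨-, hd⟩
        apply Finset.eq_empty_iff_forall_notMem.mp hd i
        rw [hi, hy]
        simp
      have h0 : (G2 m p).dist x y ≠ 0 := ((hreach x y).pos_dist_of_ne hne).ne'
      have h1 : (G2 m p).dist x y ≠ 1 := fun h =>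
        hnadj (SimpleGraph.dist_eq_one_iff_adj.mp h)
      have h2 := hub y
      omega
    refine le_antisymm ?_ ?_
    · exact csSup_le (hne0 x) (by rintro d ⟨y, rfl⟩; exact hub y)
    · exact le_csSup (hbdd x) ⟨y, hxy⟩
  -- claim 2
  have claim2 : ∀ x : Vtx m p, 2 ≤ (Z m p x.1).card → 3 ≤ ecc (G2 m p) x := by
    intro x hx
    obtain ⟨i, hi⟩ := Finset.card_pos.mp (by omega : 0 < (Z m p x.1).card)
    set T : Finset (Fin m) := Finset.univ \ (Z m p x.1 \ {i}) with hT
    have hiT : i ∈ T := by simp [hT]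
    have hTne : T ≠ ∅ := Finset.ne_empty_of_mem hiT
    have hTnu : T ≠ Finset.univ := by
      intro h
      obtain ⟨j, hj, hji⟩ := Finset.exists_mem_ne (show 1 < (Z m p x.1).card by omega) i
      have hjT : j ∈ T := h ▸ Finset.mem_univ j
      rw [hT, Finset.mem_sdiff] at hjT
      exact hjT.2 (Finset.mem_sdiff.mpr ⟨hj, Finset.notMem_singleton.mpr hji⟩)
    obtain ⟨y, hy⟩ := exists_vtx hp hinj T hTne hTnu
    have hxney : x ≠ y := by
      apply ne_of_Z_ne
      rw [hy]
      intro h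
      obtain ⟨a, haZ⟩ := exists_not_mem_Z hp hinj x
      have haT : a ∈ T := by
        rw [hT, Finset.mem_sdiff]
        exact ⟨Finset.mem_univ a, fun hc => haZ (Finset.mem_sdiff.mp hc).1⟩
      rw [← h] at haT
      exact haZ haT
    have hcover : ∀ j, j ∈ Z m p x.1 ∪ Z m p y.1 := fun j => by
      rw [hy, Finset.mem_union]
      by_cases hj : j ∈ Z m p x.1
      · exact Or.inl hj
      · refine Or.inr ?_
        rw [hT, Finset.mem_sdiff]
        exact ⟨Finset.mem_univ j, fun hc => hj (Finset.mem_sdiff.mp hc).1⟩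
    have hnadj : ¬ (G2 m p).Adj x y := by
      rw [adj_iff hp]
      rintro ⟨-, hd⟩
      apply Finset.eq_empty_iff_forall_notMem.mp hd i
      rw [hy]
      exact Finset.mem_inter.mpr ⟨hi, hiT⟩
    have hd : (G2 m p).dist x y = 3 := by
      have h3 := hdist3 x y
      have h0 : (G2 m p).dist x y ≠ 0 := ((hreach x y).pos_dist_of_ne hxney).ne'
      have h1 : (G2 m p).dist x y ≠ 1 := fun h =>
        hnadj (SimpleGraph.dist_eq_one_iff_adj.mp h)
      have h2 : (G2 m p).dist x y ≠ 2 := by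
        intro h2
        obtain ⟨q, hq⟩ := (hreach x y).exists_walk_length_eq_dist
        rw [h2] at hq
        cases q with
        | nil => simp at hq
        | cons hadj q' =>
          cases q' with
          | nil => simp at hq
          | cons hadj' q'' =>
            cases q'' with
            | nil =>
              rename_i z
              rw [adj_iff hp] at hadj hadj'
              have hzempty : Z m p z.1 = ∅ := by
                rw [Finset.eq_empty_iff_forall_notMem]
                intro j hj
                rcases Finset.mem_union.mp (hcover j) with hjx | hjy
                · exact Finset.eq_empty_iff_forall_notMem.mp hadj.2 j
                    (Finset.mem_inter.mpr ⟨hjx, hj⟩)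
                · exact Finset.eq_empty_iff_forall_notMem.mp hadj'.2 j
                    (Finset.mem_inter.mpr ⟨hj, hjy⟩)
              exact z.2.2 ((Z_eq_empty_iff hp _).mp hzempty)
            | cons h'' q''' => simp [SimpleGraph.Walk.length_cons] at hq
      omega
    exact le_csSup (hbdd x) ⟨y, hd⟩
  -- helper facts
  have hcard_ge1 : ∀ x : Vtx m p, 1 ≤ (Z m p x.1).card := fun x =>
    Finset.card_pos.mpr (Finset.nonempty_iff_ne_empty.mpr (vtx_Z_ne_empty hp x))
  have hecc_ge2 : ∀ x : Vtx m p, 2 ≤ ecc (G2 m p) x := by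
    intro x
    have h1 := hcard_ge1 x
    by_cases h : (Z m p x.1).card = 1
    · rw [claim1 x h]
    · have := claim2 x (by omega)
      omega
  -- a vertex with singleton zero-set
  have i0 : Fin m := ⟨0, by omega⟩
  obtain ⟨v0, hv0⟩ := exists_vtx hp hinj {i0} (Finset.singleton_ne_empty i0)
    (singleton_ne_univ hm i0)
  have hv0card : (Z m p v0.1).card = 1 := by rw [hv0]; simp
  have hrad : gradius (G2 m p) = 2 := by
    refine le_antisymm ?_ ?_
    · exact Nat.sInf_le ⟨v0, claim1 v0 hv0card⟩
    · exact le_csInf ⟨2, v0, claim1 v0 hv0card⟩ (by rintro d ⟨x, rfl⟩; exact hecc_ge2 x)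
  refine ⟨claim1, claim2, hrad, ?_⟩
  ext x
  simp only [Set.mem_setOf_eq, Set.mem_iUnion, XS, hrad]
  constructor
  · intro h
    have h1 := hcard_ge1 x
    have h2 : (Z m p x.1).card = 1 := by
      by_contra hc
      have := claim2 x (by omega)
      omega
    exact Finset.card_eq_one.mp h2
  · rintro ⟨i, hi⟩
    exact claim1 x (by rw [hi]; simp)
end
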